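/- For i ≠ j with 0 ≤ i, j ≤ n-1, the sets of monomials in the h's occurring in d_{n,i} and in d_{n,j} are disjoint: if P_i, P_j ∈ MvPolynomial (Fin n) 𝔽_p satisfy aeval(h) P_i = d_{n,i} and aeval(h) P_j = d_{n,j} (where aeval(h) substitutes h_1, …, h_n for the n variables), then the supports of P_i and P_j are disjoint. -/

import Mathlib

open MvPolynomial

/-- `V p n k` : the set of `𝔽_p`-linear combinations of the first `k` variables. -/
noncomputable def V (p n k : ℕ) [Fact p.Prime] : Finset (MvPolynomial (Fin n) (ZMod p)) :=
  (Finset.univ : Finset (Fin n → ZMod p)).image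
    (fun c => ∑ j ∈ Finset.univ.filter (fun j : Fin n => j.val < k), C (c j) * X j)

/-- `f p n k = ∏_{u ∈ V_k} (X - C u)`. -/
noncomputable def f (p n k : ℕ) [Fact p.Prime] :
    Polynomial (MvPolynomial (Fin n) (ZMod p)) :=
  ∏ u ∈ V p n k, (Polynomial.X - Polynomial.C u)

/-- Dickson invariant `d_{k,i}`. -/
noncomputable def d (p n k i : ℕ) [Fact p.Prime] : MvPolynomial (Fin n) (ZMod p) :=
  (-1) ^ (k - i) * (f p n k).coeff (p ^ i)

/-- Borel generator: `hGen p n j` is `h_{j+1}` of the paper. -/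
noncomputable def hGen (p n : ℕ) [Fact p.Prime] (j : Fin n) : MvPolynomial (Fin n) (ZMod p) :=
  (Polynomial.eval (X j) (f p n j.val)) ^ (p - 1)

/-- Action of `GL_n(𝔽_p)` on `S` by linear substitution `g · y_j = ∑_i g_{ij} y_i`. -/
noncomputable def gact (p n : ℕ) [Fact p.Prime] (g : GL (Fin n) (ZMod p)) :
    MvPolynomial (Fin n) (ZMod p) →ₐ[ZMod p] MvPolynomial (Fin n) (ZMod p) :=
  aeval (fun j : Fin n => ∑ i : Fin n, C ((g : Matrix (Fin n) (Fin n) (ZMod p)) i j) * X i)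

section Aux

open AddMonoidAlgebra Finset

variable {p n : ℕ} [Fact p.Prime]


noncomputable def Drev (n : ℕ) : (Fin n →₀ ℕ) → Lex (Fin n →₀ ℕ) :=
  fun m => toLex (Finsupp.domCongr (M := ℕ) Fin.revPerm m)
-- support structure of elements of V
lemma V_support {k : ℕ} {u : MvPolynomial (Fin n) (ZMod p)} (hu : u ∈ V p n k)
    {m : Fin n →₀ ℕ} (hm : m ∈ u.support) : ∃ i : Fin n, i.val < k ∧ m = Finsupp.single i 1 := by
  simp only [V, mem_image] at hu
  obtain ⟨c, _, rfl⟩ := hu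
  have h1 := MvPolynomial.support_sum hm
  rw [Finset.mem_biUnion] at h1
  obtain ⟨i, hi, hmi⟩ := h1
  refine ⟨i, (Finset.mem_filter.1 hi).2, ?_⟩
  rw [MvPolynomial.C_mul_X_eq_monomial] at hmi
  have := MvPolynomial.support_monomial_subset hmi
  simpa using this

lemma Drev_single' (i : Fin n) (c : ℕ) : Drev n (Finsupp.single i c) =
    toLex (Finsupp.single i.rev c) := by
  simp [Drev, Finsupp.domCongr_apply, Finsupp.equivMapDomain_single]

lemma toLex_single_lt_single {a b : Fin n} (h : b < a) {c d : ℕ} (hd : d ≠ 0) :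
    toLex (Finsupp.single a c) < toLex (Finsupp.single b d) := by
  rw [Finsupp.Lex.lt_iff]
  refine ⟨b, fun k hk => ?_, ?_⟩
  · have h1 : k ≠ a := fun he => absurd (he ▸ hk) (not_lt.2 (le_of_lt h))
    have h2 : k ≠ b := ne_of_lt hk
    simp [Finsupp.single_apply, h1.symm, h2.symm]
  · simp [Finsupp.single_apply, (ne_of_lt h).symm, Nat.pos_of_ne_zero hd]

lemma Drev_single_lt {i j : Fin n} (h : i < j) {c d : ℕ} (hd : d ≠ 0) :
    Drev n (Finsupp.single i c) < Drev n (Finsupp.single j d) := by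
  rw [Drev_single', Drev_single']
  exact toLex_single_lt_single (by simpa using Fin.rev_lt_rev.2 h) hd

lemma Drev_injective : Function.Injective (Drev n) :=
  toLex.injective.comp (Finsupp.domCongr (M := ℕ) Fin.revPerm).injective

lemma Drev_add (a b : Fin n →₀ ℕ) : Drev n (a + b) = Drev n a + Drev n b := by
  simp only [Drev, map_add]; rfl

lemma Drev_zero : Drev n 0 = 0 := by
  simp only [Drev, map_zero]; rfl

-- the factor X j - u is monic with leading monomial X j
lemma factor_monic {j : Fin n} {u : MvPolynomial (Fin n) (ZMod p)} (hu : u ∈ V p n j.val) :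
    (X j - u).Monic (Drev n) ∧
      (X j - u).supDegree (Drev n) = Drev n (Finsupp.single j 1) := by
  have hXj : (X j : MvPolynomial (Fin n) (ZMod p)) =
      AddMonoidAlgebra.single (Finsupp.single j 1) 1 := rfl
  have hsupu : u.supDegree (Drev n) < Drev n (Finsupp.single j 1) := by
    rw [supDegree]
    apply Finset.sup_lt_iff ?_ |>.2
    · intro m hm
      obtain ⟨i, hik, rfl⟩ := V_support hu hm
      exact Drev_single_lt (by exact Fin.mk_lt_of_lt_val hik) one_ne_zero
    · rw [bot_lt_iff_ne_bot]
      intro hbot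
      have : Drev n (Finsupp.single j 1) = Drev n 0 := by
        rw [Drev_zero]; exact hbot ▸ rfl
      exact one_ne_zero (Finsupp.single_eq_zero.1 (Drev_injective this))
  have hlt : (-u).supDegree (Drev n) < (X j : MvPolynomial (Fin n) (ZMod p)).supDegree (Drev n) := by
    rw [supDegree_neg, hXj, supDegree_single_ne_zero _ one_ne_zero]
    exact hsupu
  have hsub : (X j - u) = (X j : MvPolynomial (Fin n) (ZMod p)) + (-u) := by ring
  constructor
  · rw [Monic, hsub, leadingCoeff_add_eq_left hlt, hXj,
      leadingCoeff_single Drev_injective]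
  · rw [hsub, supDegree_add_eq_left hlt, hXj, supDegree_single_ne_zero _ one_ne_zero]

lemma Drev_smul (k : ℕ) (m : Fin n →₀ ℕ) : Drev n (k • m) = k • Drev n m := by
  induction k with
  | zero => simp [Drev_zero]
  | succ k ih => rw [succ_nsmul, succ_nsmul, Drev_add, ih]

lemma monic_prod_aux {ι : Type*} (s : Finset ι) (g : ι → MvPolynomial (Fin n) (ZMod p))
    (a : ι → (Fin n →₀ ℕ)) (hm : ∀ i ∈ s, (g i).Monic (Drev n))
    (hd : ∀ i ∈ s, (g i).supDegree (Drev n) = Drev n (a i)) :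
    (∏ i ∈ s, g i).Monic (Drev n) ∧
      (∏ i ∈ s, g i).supDegree (Drev n) = Drev n (∑ i ∈ s, a i) := by
  classical
  induction s using Finset.induction_on with
  | empty =>
    refine ⟨monic_one Drev_injective, ?_⟩
    rw [Finset.prod_empty, Finset.sum_empty, AddMonoidAlgebra.one_def,
      supDegree_single_ne_zero _ one_ne_zero, Drev_zero]
  | @insert c s' ha ih =>
    obtain ⟨ihm, ihd⟩ := ih (fun i hi => hm i (Finset.mem_insert_of_mem hi))
      (fun i hi => hd i (Finset.mem_insert_of_mem hi))
    have hmc := hm c (Finset.mem_insert_self c s')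
    rw [Finset.prod_insert ha, Finset.sum_insert ha]
    refine ⟨hmc.mul Drev_injective Drev_add ihm, ?_⟩
    rw [hmc.supDegree_mul Drev_injective Drev_add rfl ihm, ihd,
      hd c (Finset.mem_insert_self c s'), Drev_add]

lemma eval_f (j : Fin n) : Polynomial.eval (X j) (f p n j.val) =
    ∏ u ∈ V p n j.val, (X j - u) := by
  simp [f, Polynomial.eval_prod]

/-- `w` : the degree of `hGen p n j`. -/
noncomputable def wt (p n : ℕ) [Fact p.Prime] (j : Fin n) : ℕ := (p - 1) * (V p n j.val).card

lemma wt_pos (j : Fin n) : 0 < wt p n j := by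
  have h1 : 0 < (V p n j.val).card := by
    rw [Finset.card_pos, V]
    exact (Finset.univ_nonempty).image _
  have h2 : 0 < p - 1 := by
    have := (Fact.out : p.Prime).two_le
    omega
  exact Nat.mul_pos h2 h1

lemma hGen_monic (j : Fin n) :
    (hGen p n j).Monic (Drev n) ∧
      (hGen p n j).supDegree (Drev n) = Drev n (Finsupp.single j (wt p n j)) := by
  have hf := monic_prod_aux (V p n j.val) (fun u => X j - u) (fun _ => Finsupp.single j 1)
    (fun u hu => (factor_monic hu).1) (fun u hu => (factor_monic hu).2)
  beta_reduce at hf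
  unfold hGen
  rw [eval_f]
  refine ⟨hf.1.pow Drev_add Drev_injective, ?_⟩
  rw [hf.1.supDegree_pow Drev_zero Drev_add Drev_injective, hf.2, Finset.sum_const,
    ← Drev_smul]
  congr 1
  rw [smul_smul, Finsupp.smul_single, smul_eq_mul, mul_one, wt]

/-- pointwise scaling of an exponent vector by the weights `wt`. -/
noncomputable def scale (p n : ℕ) [Fact p.Prime] (t : Fin n →₀ ℕ) : Fin n →₀ ℕ :=
  t * Finsupp.equivFunOnFinite.symm (wt p n)

lemma scale_apply (t : Fin n →₀ ℕ) (i : Fin n) : scale p n t i = t i * wt p n i := rfl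

lemma scale_add (t s : Fin n →₀ ℕ) : scale p n (t + s) = scale p n t + scale p n s := by
  ext i; simp [scale_apply, Finsupp.add_apply, add_mul]

lemma scale_single (i : Fin n) (k : ℕ) :
    scale p n (Finsupp.single i k) = Finsupp.single i (k * wt p n i) := by
  ext m
  rcases eq_or_ne m i with rfl | hmi
  · simp [scale_apply]
  · simp [scale_apply, Finsupp.single_apply, Ne.symm hmi]

lemma scale_injective : Function.Injective (scale p n) := by
  intro t s h
  ext i
  have h2 : scale p n t i = scale p n s i := by rw [h]
  simp only [scale_apply] at h2
  exact Nat.eq_of_mul_eq_mul_right (wt_pos i) h2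

lemma aeval_monomial_single_one (i : Fin n) (k : ℕ) :
    aeval (hGen p n) (monomial (Finsupp.single i k) (1 : ZMod p)) = hGen p n i ^ k := by
  rw [aeval_monomial, map_one, one_mul]
  exact Finsupp.prod_single_index (pow_zero _)

lemma aeval_monomial_add (t s : Fin n →₀ ℕ) (r : ZMod p) :
    aeval (hGen p n) (monomial (t + s) r) =
      aeval (hGen p n) (monomial t r) * aeval (hGen p n) (monomial s (1 : ZMod p)) := by
  have h : (monomial (t + s)) r = (monomial t) r * (monomial s) (1 : ZMod p) := by
    rw [monomial_mul, mul_one]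
  rw [h, _root_.map_mul]

lemma leadingCoeff_aeval_monomial (t : Fin n →₀ ℕ) (r : ZMod p) :
    leadingCoeff (Drev n) (aeval (hGen p n) (monomial t r)) = r := by
  induction t using Finsupp.induction₂ with
  | zero =>
    rw [monomial_zero', aeval_C, algebraMap_eq, C_apply, ← single_eq_monomial,
      leadingCoeff_single Drev_injective]
  | add_single i k s _ _ ih =>
    rw [aeval_monomial_add, aeval_monomial_single_one,
      (((hGen_monic i).1).pow Drev_add Drev_injective).leadingCoeff_mul_eq_left
        Drev_injective Drev_add, ih]

lemma aeval_monomial_ne_zero {t : Fin n →₀ ℕ} {r : ZMod p} (hr : r ≠ 0) :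
    aeval (hGen p n) (monomial t r) ≠ 0 := by
  rw [Ne, ← leadingCoeff_eq_zero Drev_injective, leadingCoeff_aeval_monomial]
  exact hr

lemma supDegree_aeval_monomial {t : Fin n →₀ ℕ} {r : ZMod p} (hr : r ≠ 0) :
    supDegree (Drev n) (aeval (hGen p n) (monomial t r)) = Drev n (scale p n t) := by
  induction t using Finsupp.induction₂ with
  | zero =>
    rw [monomial_zero', aeval_C, algebraMap_eq, C_apply, ← single_eq_monomial,
      supDegree_single_ne_zero _ hr]
    have : scale p n 0 = 0 := by ext i; simp [scale_apply]
    rw [this, Drev_zero]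
  | add_single i k s _ hk ih =>
    rw [aeval_monomial_add, aeval_monomial_single_one,
      Monic.supDegree_mul_of_ne_zero_left Drev_injective Drev_add
        (((hGen_monic i).1).pow Drev_add Drev_injective)
        (aeval_monomial_ne_zero hr),
      ih, ((hGen_monic i).1).supDegree_pow Drev_zero Drev_add Drev_injective,
      (hGen_monic i).2, ← Drev_smul, ← Drev_add, scale_add, scale_single,
      Finsupp.smul_single, smul_eq_mul]

lemma aeval_hGen_injective :
    Function.Injective (aeval (R := ZMod p) (hGen p n)) := by
  rw [injective_iff_map_eq_zero]
  refine fun P ↦ (fun hP ↦ ?_).mtr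
  rw [P.as_sum, map_sum (aeval (hGen p n))]
  refine sum_ne_zero_of_injOn_supDegree (D := Drev n) (Finset.nonempty_iff_ne_empty.2 (support_eq_empty.not.2 hP))
    (fun t ht => aeval_monomial_ne_zero (mem_support_iff.1 ht)) ?_
  intro t ht s hs he
  simp only [Function.comp, mem_coe, mem_support_iff] at ht hs he
  rw [supDegree_aeval_monomial ht, supDegree_aeval_monomial hs] at he
  exact scale_injective (Drev_injective he)

lemma V_isHomogeneous {k : ℕ} {u : MvPolynomial (Fin n) (ZMod p)} (hu : u ∈ V p n k) :
    u.IsHomogeneous 1 := by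
  simp only [V, mem_image] at hu
  obtain ⟨c, _, rfl⟩ := hu
  exact IsHomogeneous.sum _ _ _ (fun j _ => isHomogeneous_C_mul_X _ _)

lemma coeff_prod_isHomogeneous (s : Finset (MvPolynomial (Fin n) (ZMod p)))
    (h1 : ∀ u ∈ s, u.IsHomogeneous 1) :
    (∏ u ∈ s, (Polynomial.X - Polynomial.C u)).natDegree ≤ s.card ∧
    ∀ k : ℕ, ((∏ u ∈ s, (Polynomial.X - Polynomial.C u)).coeff k).IsHomogeneous (s.card - k) := by
  classical
  induction s using Finset.induction_on with
  | empty =>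
    refine ⟨by simp, fun k => ?_⟩
    rcases Nat.eq_zero_or_pos k with rfl | hk
    · simpa using isHomogeneous_one (Fin n) (ZMod p)
    · rw [Finset.prod_empty, Polynomial.coeff_one, if_neg (by omega)]
      exact isHomogeneous_zero _ _ _
  | @insert a s' ha ih =>
    obtain ⟨ihdeg, ihcoeff⟩ := ih (fun u hu => h1 u (Finset.mem_insert_of_mem hu))
    have hcard : (insert a s').card = s'.card + 1 := Finset.card_insert_of_notMem ha
    have hXa : Polynomial.X - Polynomial.C a =
        (Polynomial.X : Polynomial (MvPolynomial (Fin n) (ZMod p))) + Polynomial.C (-a) := by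
      rw [map_neg]; ring
    have hdeg : (∏ u ∈ insert a s', (Polynomial.X - Polynomial.C u)).natDegree ≤
        (insert a s').card := by
      rw [Finset.prod_insert ha, hcard]
      refine (Polynomial.natDegree_mul_le).trans ?_
      have : (Polynomial.X - Polynomial.C a :
          Polynomial (MvPolynomial (Fin n) (ZMod p))).natDegree ≤ 1 := by
        rw [hXa]; exact (Polynomial.natDegree_add_le _ _).trans (by simp)
      omega
    refine ⟨hdeg, fun k => ?_⟩
    have ha1 : a.IsHomogeneous 1 := h1 a (Finset.mem_insert_self a s')
    rw [Finset.prod_insert ha, sub_mul, Polynomial.coeff_sub, hcard]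
    set g := ∏ u ∈ s', (Polynomial.X - Polynomial.C u) with hg
    apply IsHomogeneous.sub
    · -- coeff k (X * g)
      rcases Nat.eq_zero_or_pos k with rfl | hk
      · rw [Polynomial.mul_coeff_zero, Polynomial.coeff_X_zero, zero_mul]
        exact isHomogeneous_zero _ _ _
      · obtain ⟨k', rfl⟩ := Nat.exists_eq_add_of_lt hk
        rw [zero_add, Polynomial.coeff_X_mul]
        have := ihcoeff k'
        have he : s'.card - k' = s'.card + 1 - (k' + 1) := by omega
        exact he ▸ this
    · -- coeff k (C a * g) = a * coeff k g
      rw [Polynomial.coeff_C_mul]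
      rcases le_or_gt k s'.card with hks | hks
      · have := ha1.mul (ihcoeff k)
        have he : 1 + (s'.card - k) = s'.card + 1 - k := by omega
        exact he ▸ this
      · rw [Polynomial.coeff_eq_zero_of_natDegree_lt (lt_of_le_of_lt ihdeg hks), mul_zero]
        exact isHomogeneous_zero _ _ _

lemma hGen_isHomogeneous (j : Fin n) : (hGen p n j).IsHomogeneous (wt p n j) := by
  unfold hGen
  rw [eval_f, wt, mul_comm]
  have hprod : (∏ u ∈ V p n j.val, (X j - u)).IsHomogeneous (V p n j.val).card := by
    have := IsHomogeneous.prod (V p n j.val) (fun u => X j - u) (fun _ => 1)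
      (fun u hu => (isHomogeneous_X _ _).sub (V_isHomogeneous hu))
    simpa using this
  exact hprod.pow _

/-- weighted degree of an exponent vector. -/
noncomputable def wdeg (p n : ℕ) [Fact p.Prime] (t : Fin n →₀ ℕ) : ℕ :=
  ∑ j : Fin n, t j * wt p n j

lemma aeval_monomial_isHomogeneous (t : Fin n →₀ ℕ) (r : ZMod p) :
    (aeval (hGen p n) (monomial t r)).IsHomogeneous (wdeg p n t) := by
  rw [aeval_monomial]
  have hprod : (t.prod fun i k => hGen p n i ^ k) = ∏ j : Fin n, hGen p n j ^ t j :=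
    Finsupp.prod_pow t _
  rw [hprod]
  have h := IsHomogeneous.prod Finset.univ (fun j => hGen p n j ^ t j)
    (fun j => wt p n j * t j) (fun j _ => (hGen_isHomogeneous j).pow (t j))
  have he : wdeg p n t = 0 + ∑ j : Fin n, wt p n j * t j := by
    rw [zero_add, wdeg]
    exact Finset.sum_congr rfl (fun j _ => mul_comm _ _)
  rw [he]
  exact (isHomogeneous_C (Fin n) r).mul h

lemma support_wdeg_eq {P : MvPolynomial (Fin n) (ZMod p)} {c : ℕ}
    (hd : (aeval (hGen p n) P).IsHomogeneous c) {m : Fin n →₀ ℕ}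
    (hm : m ∈ P.support) : wdeg p n m = c := by
  classical
  by_contra hne
  set c' := wdeg p n m with hc'
  set Q : MvPolynomial (Fin n) (ZMod p) :=
    ∑ t ∈ P.support.filter (fun t => wdeg p n t = c'), monomial t (coeff t P) with hQ
  have hmfilter : m ∈ P.support.filter (fun t => wdeg p n t = c') :=
    Finset.mem_filter.2 ⟨hm, rfl⟩
  have hQm : coeff m Q = coeff m P := by
    rw [hQ, MvPolynomial.coeff_sum]
    rw [Finset.sum_eq_single_of_mem m hmfilter]
    · rw [coeff_monomial, if_pos rfl]
    · intro t _ htm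
      rw [coeff_monomial, if_neg htm]
  have hsub : P.support.filter (fun t => wdeg p n t = c') ⊆ P.support := Finset.filter_subset _ _
  have hPQ : P - Q = ∑ t ∈ P.support \ P.support.filter (fun t => wdeg p n t = c'),
      monomial t (coeff t P) := by
    rw [sub_eq_iff_eq_add, hQ, Finset.sum_sdiff hsub]
    exact P.as_sum
  -- aeval Q is homogeneous of degree c'
  have hAhom : (aeval (hGen p n) Q).IsHomogeneous c' := by
    rw [hQ, map_sum]
    refine IsHomogeneous.sum _ _ _ (fun t ht => ?_)
    have := aeval_monomial_isHomogeneous (p := p) t (coeff t P)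
    rwa [(Finset.mem_filter.1 ht).2] at this
  -- aeval Q = 0
  have hA0 : aeval (hGen p n) Q = 0 := by
    by_contra hA
    obtain ⟨μ, hμ⟩ := ne_zero_iff.1 hA
    have hdegμ : μ.degree = c' := by
      by_contra hdeg
      exact hμ (hAhom.coeff_eq_zero hdeg)
    have hPQ0 : coeff μ (aeval (hGen p n) (P - Q)) = 0 := by
      rw [hPQ, map_sum, MvPolynomial.coeff_sum]
      refine Finset.sum_eq_zero (fun t ht => ?_)
      have htne : wdeg p n t ≠ c' := by
        have := Finset.mem_sdiff.1 ht
        intro he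
        exact this.2 (Finset.mem_filter.2 ⟨this.1, he⟩)
      exact (aeval_monomial_isHomogeneous t (coeff t P)).coeff_eq_zero
        (by rw [hdegμ]; exact fun he => htne he.symm)
    have hcoeffP : coeff μ (aeval (hGen p n) P) = coeff μ (aeval (hGen p n) Q) := by
      have : P = Q + (P - Q) := by ring
      rw [this, map_add, MvPolynomial.coeff_add] at *
      rw [hPQ0, add_zero]
    have : μ.degree = c := by
      by_contra hdeg
      exact hμ (by rw [← hcoeffP] at hμ ⊢; exact absurd (hd.coeff_eq_zero hdeg) (hcoeffP ▸ hμ))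
    exact hne (by rw [← hdegμ, this])
  have hQ0 : Q = 0 := aeval_hGen_injective (by rw [hA0, map_zero])
  rw [hQ0, MvPolynomial.coeff_zero] at hQm
  exact (mem_support_iff.1 hm) hQm.symm

lemma card_V_n : (V p n n).card = p ^ n := by
  haveI : NeZero p := ⟨(Fact.out : p.Prime).ne_zero⟩
  have hinj : Function.Injective
      (fun c : Fin n → ZMod p => ∑ j : Fin n, C (c j) * X j :
        (Fin n → ZMod p) → MvPolynomial (Fin n) (ZMod p)) := by
    intro c c' h
    funext i
    have hc : ∀ b : Fin n → ZMod p,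
        coeff (Finsupp.single i 1) (∑ j : Fin n, C (b j) * X j) = b i := by
      intro b
      rw [MvPolynomial.coeff_sum]
      rw [Finset.sum_eq_single_of_mem i (Finset.mem_univ i)]
      · rw [coeff_C_mul, coeff_X', if_pos rfl, mul_one]
      · intro j _ hji
        rw [coeff_C_mul, coeff_X', if_neg (fun he => hji (by
          have := Finsupp.single_left_injective (α := Fin n) (one_ne_zero (α := ℕ))
          exact this he)), mul_zero]
    simp only at h
    rw [← hc c, ← hc c', h]
  have hfilter : Finset.univ.filter (fun j : Fin n => j.val < n) = Finset.univ := by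
    apply Finset.filter_true_of_mem
    intro j _
    exact j.isLt
  rw [V, hfilter, Finset.card_image_of_injective _ hinj, Finset.card_univ]
  simp [ZMod.card]

lemma d_isHomogeneous' (i : ℕ) :
    ((-1 : MvPolynomial (Fin n) (ZMod p)) ^ (n - i) * (f p n n).coeff (p ^ i)).IsHomogeneous
      (p ^ n - p ^ i) := by
  have h1 : ((-1 : MvPolynomial (Fin n) (ZMod p)) ^ (n - i)) =
      C ((-1 : ZMod p) ^ (n - i)) := by
    rw [map_pow, map_neg, map_one]
  rw [h1]
  have h2 := (coeff_prod_isHomogeneous (V p n n) (fun u hu => V_isHomogeneous hu)).2 (p ^ i)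
  rw [card_V_n] at h2
  have := (isHomogeneous_C (Fin n) ((-1 : ZMod p) ^ (n - i))).mul h2
  rwa [zero_add] at this

lemma d_isHomogeneous (i : ℕ) : (d p n n i).IsHomogeneous (p ^ n - p ^ i) := by
  rw [d]; exact d_isHomogeneous' i

end Aux

/-- for `i ≠ j` the sets of monomials (in the `h`'s) of `d_{n,i}` and
`d_{n,j}` are disjoint. -/
theorem stmt16 (p n : ℕ) [Fact p.Prime] (i j : ℕ) (hij : i ≠ j) (hi : i ≤ n - 1)
    (hj : j ≤ n - 1) (P₁ P₂ : MvPolynomial (Fin n) (ZMod p))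
    (hP₁ : aeval (hGen p n) P₁ = d p n n i) (hP₂ : aeval (hGen p n) P₂ = d p n n j) :
    Disjoint P₁.support P₂.support := by
  rcases Nat.eq_zero_or_pos n with rfl | hn
  · exact absurd (by omega : i = j) hij
  have hin : i < n := by omega
  have hjn : j < n := by omega
  have hd₁ : (aeval (hGen p n) P₁).IsHomogeneous (p ^ n - p ^ i) := by
    rw [hP₁]; exact d_isHomogeneous i
  have hd₂ : (aeval (hGen p n) P₂).IsHomogeneous (p ^ n - p ^ j) := by
    rw [hP₂]; exact d_isHomogeneous j
  rw [Finset.disjoint_left]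
  intro m hm1 hm2
  have e1 := support_wdeg_eq hd₁ hm1
  have e2 := support_wdeg_eq hd₂ hm2
  have hp2 : 2 ≤ p := (Fact.out : p.Prime).two_le
  have hpi : p ^ i ≤ p ^ n := Nat.pow_le_pow_right (by omega) hin.le
  have hpj : p ^ j ≤ p ^ n := Nat.pow_le_pow_right (by omega) hjn.le
  have hne : p ^ i ≠ p ^ j := fun h => hij (Nat.pow_right_injective hp2 h)
  omega
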